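/- There exists a constant C > 0 such that for every continuously differentiable function φ on K̂ = [−1,1]², every ŵ in the reference shape space P̂ = P₂(K̂) + span{ξ₁³, ξ₂³}, and each i ∈ {1, 2}, one has |∫_{K̂} φ · ∂(ŵ − Îŵ)/∂ξᵢ dξ₁dξ₂| ≤ C ‖∇φ‖_{L²(K̂)} |ŵ|_{H²(K̂)}. -/

import Mathlib

open MeasureTheory

/-- Partial derivative in the first variable of a curried function on `ℝ²`. -/
noncomputable def pdx (f : ℝ → ℝ → ℝ) : ℝ → ℝ → ℝ := fun x y => deriv (fun t => f t y) x

/-- Partial derivative in the second variable of a curried function on `ℝ²`. -/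
noncomputable def pdy (f : ℝ → ℝ → ℝ) : ℝ → ℝ → ℝ := fun x y => deriv (fun t => f x t) y

/-- Membership in the shape space `P(K) = P₂(K) + span{x₁³, x₂³}` of the two-dimensional
rectangular Morley element. -/
def MorleyShape2 (w : ℝ → ℝ → ℝ) : Prop :=
  ∃ c0 c1 c2 c3 c4 c5 c6 c7 : ℝ, ∀ x y : ℝ,
    w x y = c0 + c1 * x + c2 * y + c3 * x ^ 2 + c4 * (x * y) + c5 * y ^ 2
      + c6 * x ^ 3 + c7 * y ^ 3

/-- The bilinear (Q₁) interpolation operator on the reference square `[-1,1]²`: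
the unique element of `span{1, ξ₁, ξ₂, ξ₁ξ₂}` agreeing with `w` at the four vertices. -/
noncomputable def Ihat (w : ℝ → ℝ → ℝ) : ℝ → ℝ → ℝ := fun x y =>
  (w 1 1 * ((1 + x) * (1 + y)) + w 1 (-1) * ((1 + x) * (1 - y))
    + w (-1) 1 * ((1 - x) * (1 + y)) + w (-1) (-1) * ((1 - x) * (1 - y))) / 4

/-- The `H²` seminorm of `v` on the rectangle `[a,b] × [c,d]`, each ordering of mixed
partial derivatives counted. -/
noncomputable def semiH2R (v : ℝ → ℝ → ℝ) (a b c d : ℝ) : ℝ :=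
  Real.sqrt (∫ x in a..b, ∫ y in c..d,
    (pdx (pdx v) x y) ^ 2 + (pdx (pdy v) x y) ^ 2 + (pdy (pdx v) x y) ^ 2
      + (pdy (pdy v) x y) ^ 2)

/-- The `L²` norm of the gradient of `φ` on the rectangle `[a,b] × [c,d]`. -/
noncomputable def gradL2R (φ : ℝ → ℝ → ℝ) (a b c d : ℝ) : ℝ :=
  Real.sqrt (∫ x in a..b, ∫ y in c..d, (pdx φ x y) ^ 2 + (pdy φ x y) ^ 2)

/-- `φ` is continuously differentiable on a neighborhood of the rectangle `[a,b] × [c,d]`. -/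
def C1Near (φ : ℝ → ℝ → ℝ) (a b c d : ℝ) : Prop :=
  ∃ U : Set (ℝ × ℝ), IsOpen U ∧ Set.Icc a b ×ˢ Set.Icc c d ⊆ U ∧
    ContDiffOn ℝ 1 (fun p : ℝ × ℝ => φ p.1 p.2) U

/- ### Auxiliary lemmas -/

lemma hP8 (b1 b2 b3 b4 b5 b6 b7 b8 : ℝ) (x : ℝ) :
    HasDerivAt (fun t : ℝ => b1*t^1 + b2*t^2 + b3*t^3 + b4*t^4 + b5*t^5 + b6*t^6 + b7*t^7 + b8*t^8)
      (b1 + 2*b2*x + 3*b3*x^2 + 4*b4*x^3 + 5*b5*x^4 + 6*b6*x^5 + 7*b7*x^6 + 8*b8*x^7) x := by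
  have H := ((((((((hasDerivAt_pow 1 x).const_mul b1).add ((hasDerivAt_pow 2 x).const_mul b2)).add
    ((hasDerivAt_pow 3 x).const_mul b3)).add ((hasDerivAt_pow 4 x).const_mul b4)).add
    ((hasDerivAt_pow 5 x).const_mul b5)).add ((hasDerivAt_pow 6 x).const_mul b6)).add
    ((hasDerivAt_pow 7 x).const_mul b7)).add ((hasDerivAt_pow 8 x).const_mul b8)
  refine H.congr_deriv ?_
  push_cast
  ring

lemma intP (a0 a1 a2 a3 a4 a5 a6 a7 : ℝ) :
    (∫ x in (-1:ℝ)..1, (a0 + a1*x^1 + a2*x^2 + a3*x^3 + a4*x^4 + a5*x^5 + a6*x^6 + a7*x^7))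
      = 2*a0 + 2/3*a2 + 2/5*a4 + 2/7*a6 := by
  rw [intervalIntegral.integral_eq_sub_of_hasDerivAt (f := fun t : ℝ =>
      a0*t^1 + (a1/2)*t^2 + (a2/3)*t^3 + (a3/4)*t^4 + (a4/5)*t^5 + (a5/6)*t^6 + (a6/7)*t^7 + (a7/8)*t^8)]
  · ring
  · intro x _
    refine (hP8 a0 (a1/2) (a2/3) (a3/4) (a4/5) (a5/6) (a6/7) (a7/8) x).congr_deriv ?_
    ring
  · apply Continuous.intervalIntegrable
    fun_prop

lemma derivP3 (C b1 b2 b3 : ℝ) (x : ℝ) :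
    deriv (fun t : ℝ => C + (b1*t^1 + b2*t^2 + b3*t^3 + 0*t^4 + 0*t^5 + 0*t^6 + 0*t^7 + 0*t^8)) x
      = b1 + 2*b2*x + 3*b3*x^2 := by
  rw [((hP8 b1 b2 b3 0 0 0 0 0 x).const_add C).deriv]
  ring

lemma cubic_deriv (a b : ℝ) (x : ℝ) :
    HasDerivAt (fun t : ℝ => a*(t^2-1) + b*(t^3-t)) (2*a*x + b*(3*x^2-1)) x := by
  have H := (((hasDerivAt_pow 2 x).sub_const 1).const_mul a).add
    (((hasDerivAt_pow 3 x).sub (hasDerivAt_id' x)).const_mul b)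
  refine H.congr_deriv ?_
  push_cast
  ring

lemma cs1 {f g : ℝ → ℝ} (hf : ContinuousOn f (Set.Icc (-1:ℝ) 1))
    (hg : ContinuousOn g (Set.Icc (-1:ℝ) 1)) :
    |∫ x in (-1:ℝ)..1, f x * g x| ≤
      Real.sqrt (∫ x in (-1:ℝ)..1, f x ^ 2) * Real.sqrt (∫ x in (-1:ℝ)..1, g x ^ 2) := by
  have hIcc : Set.uIcc (-1:ℝ) 1 = Set.Icc (-1:ℝ) 1 := Set.uIcc_of_le (by norm_num)
  have hf' : ContinuousOn f (Set.uIcc (-1:ℝ) 1) := hIcc ▸ hf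
  have hg' : ContinuousOn g (Set.uIcc (-1:ℝ) 1) := hIcc ▸ hg
  have hif : IntervalIntegrable (fun x => f x ^ 2) volume (-1) 1 :=
    (hf'.pow 2).intervalIntegrable
  have hig : IntervalIntegrable (fun x => g x ^ 2) volume (-1) 1 :=
    (hg'.pow 2).intervalIntegrable
  have hifg : IntervalIntegrable (fun x => f x * g x) volume (-1) 1 :=
    (hf'.mul hg').intervalIntegrable
  set A := ∫ x in (-1:ℝ)..1, f x ^ 2 with hA
  set B := ∫ x in (-1:ℝ)..1, f x * g x with hB
  set C := ∫ x in (-1:ℝ)..1, g x ^ 2 with hC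
  have hAnn : 0 ≤ A := intervalIntegral.integral_nonneg (by norm_num) (fun x _ => sq_nonneg _)
  have key : ∀ t : ℝ, 0 ≤ A * (t * t) + (2 * B) * t + C := by
    intro t
    have h0 : 0 ≤ ∫ x in (-1:ℝ)..1, (t * f x + g x) ^ 2 :=
      intervalIntegral.integral_nonneg (by norm_num) (fun x _ => sq_nonneg _)
    have hexp : (∫ x in (-1:ℝ)..1, (t * f x + g x) ^ 2)
        = A * (t * t) + (2 * B) * t + C := by
      have h1 : (∫ x in (-1:ℝ)..1, (t * f x + g x) ^ 2)
          = ∫ x in (-1:ℝ)..1, ((t * t) * f x ^ 2 + ((2 * t) * (f x * g x) + g x ^ 2)) :=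
        intervalIntegral.integral_congr (fun x _ => by ring)
      rw [h1, intervalIntegral.integral_add (hif.const_mul _)
          ((hifg.const_mul _).add hig),
        intervalIntegral.integral_add (hifg.const_mul _) hig,
        intervalIntegral.integral_const_mul, intervalIntegral.integral_const_mul]
      ring
    linarith [hexp ▸ h0]
  have hd := discrim_le_zero key
  rw [discrim] at hd
  have hB2 : B ^ 2 ≤ A * C := by nlinarith [hd]
  calc |B| = Real.sqrt (B ^ 2) := (Real.sqrt_sq_eq_abs B).symm
    _ ≤ Real.sqrt (A * C) := Real.sqrt_le_sqrt hB2
    _ = Real.sqrt A * Real.sqrt C := Real.sqrt_mul hAnn C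

lemma swap_box {f : ℝ → ℝ → ℝ}
    (hf : ContinuousOn (Function.uncurry f) (Set.Icc (-1:ℝ) 1 ×ˢ Set.Icc (-1:ℝ) 1)) :
    (∫ x in (-1:ℝ)..1, ∫ y in (-1:ℝ)..1, f x y) = ∫ y in (-1:ℝ)..1, ∫ x in (-1:ℝ)..1, f x y := by
  have h1 : (-1:ℝ) ≤ 1 := by norm_num
  have hint : Integrable (Function.uncurry f)
      ((volume.restrict (Set.Ioc (-1:ℝ) 1)).prod (volume.restrict (Set.Ioc (-1:ℝ) 1))) := by
    rw [Measure.prod_restrict, ← Measure.volume_eq_prod]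
    exact (hf.integrableOn_compact (isCompact_Icc.prod isCompact_Icc)).mono_set
      (Set.prod_mono Set.Ioc_subset_Icc_self Set.Ioc_subset_Icc_self)
  simp only [intervalIntegral.integral_of_le h1]
  exact MeasureTheory.integral_integral_swap hint

lemma core {f : ℝ → ℝ → ℝ} (hf : Continuous (Function.uncurry f)) {g : ℝ → ℝ}
    (hg : Continuous g) :
    |∫ t in (-1:ℝ)..1, ∫ s in (-1:ℝ)..1, f t s * g s| ≤
      Real.sqrt (∫ t in (-1:ℝ)..1, ∫ s in (-1:ℝ)..1, f t s ^ 2) *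
      Real.sqrt (2 * ∫ s in (-1:ℝ)..1, g s ^ 2) := by
  have h1 : (-1:ℝ) ≤ 1 := by norm_num
  have hfs : ∀ t, Continuous (fun s => f t s) := fun t => hf.comp (Continuous.prodMk_right t)
  have hA : Continuous (fun t => ∫ s in (-1:ℝ)..1, f t s * g s) :=
    intervalIntegral.continuous_parametric_intervalIntegral_of_continuous'
      (by exact hf.mul (hg.comp continuous_snd)) _ _
  have hF2 : Continuous (fun t => ∫ s in (-1:ℝ)..1, f t s ^ 2) :=
    intervalIntegral.continuous_parametric_intervalIntegral_of_continuous'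
      (by exact hf.pow 2) _ _
  have hFt0 : ∀ t, 0 ≤ ∫ s in (-1:ℝ)..1, f t s ^ 2 := fun t =>
    intervalIntegral.integral_nonneg h1 (fun s _ => sq_nonneg _)
  set G2 := ∫ s in (-1:ℝ)..1, g s ^ 2 with hG2
  have step2 : ∀ t, |∫ s in (-1:ℝ)..1, f t s * g s| ≤
      Real.sqrt (∫ s in (-1:ℝ)..1, f t s ^ 2) * Real.sqrt G2 := fun t =>
    cs1 (hfs t).continuousOn hg.continuousOn
  have step5 : (∫ t in (-1:ℝ)..1, Real.sqrt (∫ s in (-1:ℝ)..1, f t s ^ 2)) ≤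
      Real.sqrt (∫ t in (-1:ℝ)..1, ∫ s in (-1:ℝ)..1, f t s ^ 2) * Real.sqrt 2 := by
    have hsq : Continuous (fun t => Real.sqrt (∫ s in (-1:ℝ)..1, f t s ^ 2)) :=
      Real.continuous_sqrt.comp hF2
    calc (∫ t in (-1:ℝ)..1, Real.sqrt (∫ s in (-1:ℝ)..1, f t s ^ 2))
        = ∫ t in (-1:ℝ)..1, Real.sqrt (∫ s in (-1:ℝ)..1, f t s ^ 2) * 1 := by simp
      _ ≤ |∫ t in (-1:ℝ)..1, Real.sqrt (∫ s in (-1:ℝ)..1, f t s ^ 2) * 1| := le_abs_self _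
      _ ≤ Real.sqrt (∫ t in (-1:ℝ)..1, Real.sqrt (∫ s in (-1:ℝ)..1, f t s ^ 2) ^ 2) *
          Real.sqrt (∫ t in (-1:ℝ)..1, (1:ℝ) ^ 2) := cs1 hsq.continuousOn continuousOn_const
      _ = Real.sqrt (∫ t in (-1:ℝ)..1, ∫ s in (-1:ℝ)..1, f t s ^ 2) * Real.sqrt 2 := by
          rw [intervalIntegral.integral_congr (g := fun t => ∫ s in (-1:ℝ)..1, f t s ^ 2)
            (fun t _ => Real.sq_sqrt (hFt0 t))]
          norm_num
  calc |∫ t in (-1:ℝ)..1, ∫ s in (-1:ℝ)..1, f t s * g s|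
      ≤ ∫ t in (-1:ℝ)..1, |∫ s in (-1:ℝ)..1, f t s * g s| :=
        intervalIntegral.abs_integral_le_integral_abs h1
    _ ≤ ∫ t in (-1:ℝ)..1, Real.sqrt (∫ s in (-1:ℝ)..1, f t s ^ 2) * Real.sqrt G2 := by
        apply intervalIntegral.integral_mono_on h1 (hA.abs.intervalIntegrable _ _)
          (((Real.continuous_sqrt.comp hF2).mul continuous_const).intervalIntegrable _ _)
        exact fun t _ => step2 t
    _ = (∫ t in (-1:ℝ)..1, Real.sqrt (∫ s in (-1:ℝ)..1, f t s ^ 2)) * Real.sqrt G2 :=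
        intervalIntegral.integral_mul_const _ _
    _ ≤ (Real.sqrt (∫ t in (-1:ℝ)..1, ∫ s in (-1:ℝ)..1, f t s ^ 2) * Real.sqrt 2) *
          Real.sqrt G2 := mul_le_mul_of_nonneg_right step5 (Real.sqrt_nonneg _)
    _ = Real.sqrt (∫ t in (-1:ℝ)..1, ∫ s in (-1:ℝ)..1, f t s ^ 2) * Real.sqrt (2 * G2) := by
        rw [Real.sqrt_mul (by norm_num : (0:ℝ) ≤ 2)]
        ring

lemma phi_pack {φ : ℝ → ℝ → ℝ} (hφ : C1Near φ (-1) 1 (-1) 1) :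
    ∃ fx fy : ℝ → ℝ → ℝ, Continuous (Function.uncurry fx) ∧ Continuous (Function.uncurry fy) ∧
      (∀ x ∈ Set.Icc (-1:ℝ) 1, ∀ y ∈ Set.Icc (-1:ℝ) 1,
        HasDerivAt (fun t => φ t y) (fx x y) x ∧ HasDerivAt (fun t => φ x t) (fy x y) y ∧
        pdx φ x y = fx x y ∧ pdy φ x y = fy x y) ∧
      ContinuousOn (fun p : ℝ × ℝ => φ p.1 p.2) (Set.Icc (-1:ℝ) 1 ×ˢ Set.Icc (-1:ℝ) 1) := by
  obtain ⟨U, hU, hKU, hF⟩ := hφ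
  set F : ℝ × ℝ → ℝ := fun p => φ p.1 p.2 with hFdef
  set cl : ℝ → ℝ := fun t => max (-1) (min 1 t) with hcl
  have hclc : Continuous cl := continuous_const.max (continuous_const.min continuous_id)
  have hclmem : ∀ t, cl t ∈ Set.Icc (-1:ℝ) 1 :=
    fun t => ⟨le_max_left _ _, max_le (by norm_num) (min_le_left _ _)⟩
  have hcleq : ∀ t ∈ Set.Icc (-1:ℝ) 1, cl t = t := by
    intro t ht
    simp only [hcl]
    rw [min_eq_right ht.2, max_eq_right ht.1]
  have hclp : Continuous (fun p : ℝ × ℝ => (cl p.1, cl p.2)) :=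
    (hclc.comp continuous_fst).prodMk (hclc.comp continuous_snd)
  have hclpU : ∀ p : ℝ × ℝ, (cl p.1, cl p.2) ∈ U :=
    fun p => hKU ⟨hclmem _, hclmem _⟩
  have hfd : ContinuousOn (fderiv ℝ F) U := hF.continuousOn_fderiv_of_isOpen hU le_rfl
  refine ⟨fun x y => fderiv ℝ F (cl x, cl y) (1, 0),
    fun x y => fderiv ℝ F (cl x, cl y) (0, 1), ?_, ?_, ?_, hF.continuousOn.mono hKU⟩
  · exact (ContinuousLinearMap.apply ℝ ℝ ((1:ℝ), (0:ℝ))).continuous.comp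
      (hfd.comp_continuous hclp hclpU)
  · exact (ContinuousLinearMap.apply ℝ ℝ ((0:ℝ), (1:ℝ))).continuous.comp
      (hfd.comp_continuous hclp hclpU)
  · intro x hx y hy
    have hmem : (x, y) ∈ U := hKU ⟨hx, hy⟩
    have hdiff : DifferentiableAt ℝ F (x, y) :=
      (hF.contDiffAt (hU.mem_nhds hmem)).differentiableAt one_ne_zero
    have hclx : cl x = x := hcleq x hx
    have hcly : cl y = y := hcleq y hy
    have hdx : HasDerivAt (fun t => φ t y) (fderiv ℝ F (x, y) (1, 0)) x := by
      have h1 : HasDerivAt (fun t : ℝ => ((t, y) : ℝ × ℝ)) ((1:ℝ), (0:ℝ)) x :=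
        HasDerivAt.prodMk (hasDerivAt_id' x) (hasDerivAt_const x y)
      exact hdiff.hasFDerivAt.comp_hasDerivAt x h1
    have hdy : HasDerivAt (fun t => φ x t) (fderiv ℝ F (x, y) (0, 1)) y := by
      have h1 : HasDerivAt (fun t : ℝ => ((x, t) : ℝ × ℝ)) ((0:ℝ), (1:ℝ)) y :=
        HasDerivAt.prodMk (hasDerivAt_const y x) (hasDerivAt_id' y)
      exact hdiff.hasFDerivAt.comp_hasDerivAt y h1
    simp only [hclx, hcly]
    refine ⟨hdx, hdy, ?_, ?_⟩
    · show deriv (fun t => φ t y) x = _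
      exact hdx.deriv
    · show deriv (fun t => φ x t) y = _
      exact hdy.deriv

lemma w_pack {w : ℝ → ℝ → ℝ} (hw : MorleyShape2 w) :
    ∃ c3 c5 c6 c7 : ℝ,
      (∀ x y : ℝ, pdx (fun a b => w a b - Ihat w a b) x y = 2*c3*x + c6*(3*x^2-1)) ∧
      (∀ x y : ℝ, pdy (fun a b => w a b - Ihat w a b) x y = 2*c5*y + c7*(3*y^2-1)) ∧
      (∀ x : ℝ, HasDerivAt (fun t : ℝ => c3*(t^2-1) + c6*(t^3-t)) (2*c3*x + c6*(3*x^2-1)) x) ∧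
      (∀ y : ℝ, HasDerivAt (fun t : ℝ => c5*(t^2-1) + c7*(t^3-t)) (2*c5*y + c7*(3*y^2-1)) y) ∧
      Real.sqrt (2 * ∫ x in (-1:ℝ)..1, (c3*(x^2-1) + c6*(x^3-x)) ^ 2) ≤ semiH2R w (-1) 1 (-1) 1 ∧
      Real.sqrt (2 * ∫ y in (-1:ℝ)..1, (c5*(y^2-1) + c7*(y^3-y)) ^ 2) ≤ semiH2R w (-1) 1 (-1) 1 := by
  obtain ⟨c0, c1, c2, c3, c4, c5, c6, c7, hw⟩ := hw
  have hpx : ∀ x y : ℝ, pdx w x y = (c1 + c4*y) + 2*c3*x + 3*c6*x^2 := by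
    intro x y
    show deriv (fun t => w t y) x = _
    rw [show (fun t => w t y) = fun t : ℝ => (c0 + c2*y + c5*y^2 + c7*y^3)
        + ((c1+c4*y)*t^1 + c3*t^2 + c6*t^3 + 0*t^4 + 0*t^5 + 0*t^6 + 0*t^7 + 0*t^8) from
      funext fun t => by rw [hw t y]; ring, derivP3]
  have hpy : ∀ x y : ℝ, pdy w x y = (c2 + c4*x) + 2*c5*y + 3*c7*y^2 := by
    intro x y
    show deriv (fun t => w x t) y = _
    rw [show (fun t => w x t) = fun t : ℝ => (c0 + c1*x + c3*x^2 + c6*x^3)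
        + ((c2+c4*x)*t^1 + c5*t^2 + c7*t^3 + 0*t^4 + 0*t^5 + 0*t^6 + 0*t^7 + 0*t^8) from
      funext fun t => by rw [hw x t]; ring, derivP3]
  have hxx : ∀ x y : ℝ, pdx (pdx w) x y = 2*c3 + 6*c6*x := by
    intro x y
    show deriv (fun t => pdx w t y) x = _
    rw [show (fun t => pdx w t y) = fun t : ℝ => (c1 + c4*y)
        + ((2*c3)*t^1 + (3*c6)*t^2 + 0*t^3 + 0*t^4 + 0*t^5 + 0*t^6 + 0*t^7 + 0*t^8) from
      funext fun t => by rw [hpx t y]; ring, derivP3]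
    ring
  have hyx : ∀ x y : ℝ, pdy (pdx w) x y = c4 := by
    intro x y
    show deriv (fun t => pdx w x t) y = _
    rw [show (fun t => pdx w x t) = fun t : ℝ => (c1 + 2*c3*x + 3*c6*x^2)
        + (c4*t^1 + 0*t^2 + 0*t^3 + 0*t^4 + 0*t^5 + 0*t^6 + 0*t^7 + 0*t^8) from
      funext fun t => by rw [hpx x t]; ring, derivP3]
    ring
  have hxy : ∀ x y : ℝ, pdx (pdy w) x y = c4 := by
    intro x y
    show deriv (fun t => pdy w t y) x = _
    rw [show (fun t => pdy w t y) = fun t : ℝ => (c2 + 2*c5*y + 3*c7*y^2)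
        + (c4*t^1 + 0*t^2 + 0*t^3 + 0*t^4 + 0*t^5 + 0*t^6 + 0*t^7 + 0*t^8) from
      funext fun t => by rw [hpy t y]; ring, derivP3]
    ring
  have hyy : ∀ x y : ℝ, pdy (pdy w) x y = 2*c5 + 6*c7*y := by
    intro x y
    show deriv (fun t => pdy w x t) y = _
    rw [show (fun t => pdy w x t) = fun t : ℝ => (c2 + c4*x)
        + ((2*c5)*t^1 + (3*c7)*t^2 + 0*t^3 + 0*t^4 + 0*t^5 + 0*t^6 + 0*t^7 + 0*t^8) from
      funext fun t => by rw [hpy x t]; ring, derivP3]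
    ring
  have hsem : semiH2R w (-1) 1 (-1) 1
      = Real.sqrt (16*c3^2 + 8*c4^2 + 16*c5^2 + 48*c6^2 + 48*c7^2) := by
    unfold semiH2R
    congr 1
    simp only [hxx, hxy, hyx, hyy]
    have hin : ∀ x : ℝ, (∫ y in (-1:ℝ)..1, ((2*c3 + 6*c6*x)^2 + c4^2 + c4^2 + (2*c5 + 6*c7*y)^2))
        = (8*c3^2 + 4*c4^2 + 8*c5^2 + 24*c7^2) + (48*c3*c6)*x^1 + (72*c6^2)*x^2
          + 0*x^3 + 0*x^4 + 0*x^5 + 0*x^6 + 0*x^7 := by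
      intro x
      rw [intervalIntegral.integral_congr (g := fun y : ℝ =>
          ((2*c3 + 6*c6*x)^2 + 2*c4^2 + 4*c5^2) + (24*c5*c7)*y^1 + (36*c7^2)*y^2
            + 0*y^3 + 0*y^4 + 0*y^5 + 0*y^6 + 0*y^7) (fun y _ => by ring), intP]
      ring
    simp only [hin]
    rw [intP]
    ring
  refine ⟨c3, c5, c6, c7, ?_, ?_, cubic_deriv c3 c6, cubic_deriv c5 c7, ?_, ?_⟩
  · intro x y
    show deriv (fun t => w t y - Ihat w t y) x = _
    rw [show (fun t => w t y - Ihat w t y)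
        = fun t : ℝ => (c5*(y^2-1) + c7*(y^3-y)) + (c3*(t^2-1) + c6*(t^3-t)) from
      funext fun t => by
        simp only [Ihat]
        rw [hw t y, hw 1 1, hw 1 (-1), hw (-1) 1, hw (-1) (-1)]
        ring]
    exact ((cubic_deriv c3 c6 x).const_add _).deriv
  · intro x y
    show deriv (fun t => w x t - Ihat w x t) y = _
    rw [show (fun t => w x t - Ihat w x t)
        = fun t : ℝ => (c3*(x^2-1) + c6*(x^3-x)) + (c5*(t^2-1) + c7*(t^3-t)) from
      funext fun t => by
        simp only [Ihat]
        rw [hw x t, hw 1 1, hw 1 (-1), hw (-1) 1, hw (-1) (-1)]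
        ring]
    exact ((cubic_deriv c5 c7 y).const_add _).deriv
  · rw [hsem]
    apply Real.sqrt_le_sqrt
    have h : (∫ x in (-1:ℝ)..1, (c3*(x^2-1) + c6*(x^3-x)) ^ 2)
        = 16/15*c3^2 + 16/105*c6^2 := by
      rw [intervalIntegral.integral_congr (g := fun x : ℝ => c3^2 + (2*c3*c6)*x^1
          + (c6^2 - 2*c3^2)*x^2 + (-(4*c3*c6))*x^3 + (c3^2 - 2*c6^2)*x^4 + (2*c3*c6)*x^5
          + (c6^2)*x^6 + 0*x^7) (fun x _ => by ring), intP]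
      ring
    rw [h]
    nlinarith [sq_nonneg c3, sq_nonneg c4, sq_nonneg c5, sq_nonneg c6, sq_nonneg c7]
  · rw [hsem]
    apply Real.sqrt_le_sqrt
    have h : (∫ y in (-1:ℝ)..1, (c5*(y^2-1) + c7*(y^3-y)) ^ 2)
        = 16/15*c5^2 + 16/105*c7^2 := by
      rw [intervalIntegral.integral_congr (g := fun y : ℝ => c5^2 + (2*c5*c7)*y^1
          + (c7^2 - 2*c5^2)*y^2 + (-(4*c5*c7))*y^3 + (c5^2 - 2*c7^2)*y^4 + (2*c5*c7)*y^5
          + (c7^2)*y^6 + 0*y^7) (fun y _ => by ring), intP]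
      ring
    rw [h]
    nlinarith [sq_nonneg c3, sq_nonneg c4, sq_nonneg c5, sq_nonneg c6, sq_nonneg c7]

/-- Bramble–Hilbert type bound on the reference square for the bilinear interpolation
error of functions in the reference Morley shape space, tested against `C¹` functions. -/
theorem stmt_3 :
    ∃ C > (0:ℝ), ∀ φ w : ℝ → ℝ → ℝ, C1Near φ (-1) 1 (-1) 1 → MorleyShape2 w →
      |∫ x in (-1:ℝ)..1, ∫ y in (-1:ℝ)..1,
          φ x y * pdx (fun a b => w a b - Ihat w a b) x y|
        ≤ C * gradL2R φ (-1) 1 (-1) 1 * semiH2R w (-1) 1 (-1) 1 ∧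
      |∫ x in (-1:ℝ)..1, ∫ y in (-1:ℝ)..1,
          φ x y * pdy (fun a b => w a b - Ihat w a b) x y|
        ≤ C * gradL2R φ (-1) 1 (-1) 1 * semiH2R w (-1) 1 (-1) 1 := by
  refine ⟨1, one_pos, ?_⟩
  intro φ w hφ hwm
  obtain ⟨fx, fy, hfxc, hfyc, hpack, hφc⟩ := phi_pack hφ
  obtain ⟨c3, c5, c6, c7, hpdxe, hpdye, hGxd, hGyd, hsx, hsy⟩ := w_pack hwm
  have hIcc : Set.uIcc (-1:ℝ) 1 = Set.Icc (-1:ℝ) 1 := Set.uIcc_of_le (by norm_num)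
  have h1 : (-1:ℝ) ≤ 1 := by norm_num
  have hgrad_eq : gradL2R φ (-1) 1 (-1) 1
      = Real.sqrt (∫ x in (-1:ℝ)..1, ∫ y in (-1:ℝ)..1, fx x y ^ 2 + fy x y ^ 2) := by
    unfold gradL2R
    congr 1
    apply intervalIntegral.integral_congr
    intro x hx
    apply intervalIntegral.integral_congr
    intro y hy
    have h := hpack x (hIcc ▸ hx) y (hIcc ▸ hy)
    simp only [h.2.2.1, h.2.2.2]
  have hmono : ∀ p q : ℝ → ℝ → ℝ, Continuous (Function.uncurry p) →
      Continuous (Function.uncurry q) → (∀ x y, p x y ≤ q x y) →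
      (∫ x in (-1:ℝ)..1, ∫ y in (-1:ℝ)..1, p x y)
        ≤ ∫ x in (-1:ℝ)..1, ∫ y in (-1:ℝ)..1, q x y := by
    intro p q hp hq hle
    apply intervalIntegral.integral_mono_on h1
      ((intervalIntegral.continuous_parametric_intervalIntegral_of_continuous'
        hp _ _).intervalIntegrable _ _)
      ((intervalIntegral.continuous_parametric_intervalIntegral_of_continuous'
        hq _ _).intervalIntegrable _ _)
    intro x _
    apply intervalIntegral.integral_mono h1
      ((hp.comp (Continuous.prodMk_right x)).intervalIntegrable _ _)
      ((hq.comp (Continuous.prodMk_right x)).intervalIntegrable _ _)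
    exact fun y => hle x y
  have hgrx : Real.sqrt (∫ x in (-1:ℝ)..1, ∫ y in (-1:ℝ)..1, fx x y ^ 2)
      ≤ gradL2R φ (-1) 1 (-1) 1 := by
    rw [hgrad_eq]
    apply Real.sqrt_le_sqrt
    exact hmono _ _ (by exact hfxc.pow 2) (by exact (hfxc.pow 2).add (hfyc.pow 2))
      (fun x y => le_add_of_nonneg_right (sq_nonneg _))
  have hgry : Real.sqrt (∫ x in (-1:ℝ)..1, ∫ y in (-1:ℝ)..1, fy x y ^ 2)
      ≤ gradL2R φ (-1) 1 (-1) 1 := by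
    rw [hgrad_eq]
    apply Real.sqrt_le_sqrt
    exact hmono _ _ (by exact hfyc.pow 2) (by exact (hfxc.pow 2).add (hfyc.pow 2))
      (fun x y => le_add_of_nonneg_left (sq_nonneg _))
  have hgr0 : 0 ≤ gradL2R φ (-1) 1 (-1) 1 := Real.sqrt_nonneg _
  constructor
  · -- pdx case
    rw [one_mul]
    calc |∫ x in (-1:ℝ)..1, ∫ y in (-1:ℝ)..1,
          φ x y * pdx (fun a b => w a b - Ihat w a b) x y|
        = |∫ x in (-1:ℝ)..1, ∫ y in (-1:ℝ)..1, φ x y * (2*c3*x + c6*(3*x^2-1))| := by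
          simp only [hpdxe]
      _ = |∫ y in (-1:ℝ)..1, ∫ x in (-1:ℝ)..1, φ x y * (2*c3*x + c6*(3*x^2-1))| := by
          rw [swap_box (f := fun x y => φ x y * (2*c3*x + c6*(3*x^2-1)))
            (by exact hφc.mul ((by fun_prop :
              Continuous fun p : ℝ × ℝ => 2*c3*p.1 + c6*(3*p.1^2-1)).continuousOn))]
      _ = |∫ y in (-1:ℝ)..1, ∫ x in (-1:ℝ)..1, (-fx x y) * (c3*(x^2-1) + c6*(x^3-x))| := by
          congr 1
          apply intervalIntegral.integral_congr
          intro y hy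
          have hy' : y ∈ Set.Icc (-1:ℝ) 1 := hIcc ▸ hy
          have hneg : (∫ x in (-1:ℝ)..1, (-fx x y) * (c3*(x^2-1) + c6*(x^3-x)))
              = -∫ x in (-1:ℝ)..1, fx x y * (c3*(x^2-1) + c6*(x^3-x)) := by
            rw [← intervalIntegral.integral_neg]
            exact intervalIntegral.integral_congr (fun x _ => by ring)
          show (∫ x in (-1:ℝ)..1, φ x y * (2*c3*x + c6*(3*x^2-1)))
              = (∫ x in (-1:ℝ)..1, (-fx x y) * (c3*(x^2-1) + c6*(x^3-x)))
          rw [hneg, intervalIntegral.integral_mul_deriv_eq_deriv_mul (a := (-1:ℝ)) (b := (1:ℝ))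
            (u := fun x => φ x y) (v := fun x => c3*(x^2-1) + c6*(x^3-x))
            (u' := fun x => fx x y) (v' := fun x => 2*c3*x + c6*(3*x^2-1))
            (fun x hx => (hpack x (hIcc ▸ hx) y hy').1) (fun x _ => hGxd x)
            ((by exact hfxc.comp (continuous_id.prodMk continuous_const) :
              Continuous fun x => fx x y).intervalIntegrable _ _)
            ((by fun_prop :
              Continuous fun x : ℝ => 2*c3*x + c6*(3*x^2-1)).intervalIntegrable _ _)]
          norm_num
      _ ≤ Real.sqrt (∫ y in (-1:ℝ)..1, ∫ x in (-1:ℝ)..1, (-fx x y) ^ 2) *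
          Real.sqrt (2 * ∫ x in (-1:ℝ)..1, (c3*(x^2-1) + c6*(x^3-x)) ^ 2) :=
          core (f := fun t s => -fx s t)
            (by exact (hfxc.comp continuous_swap).neg) (by fun_prop)
      _ = Real.sqrt (∫ x in (-1:ℝ)..1, ∫ y in (-1:ℝ)..1, fx x y ^ 2) *
          Real.sqrt (2 * ∫ x in (-1:ℝ)..1, (c3*(x^2-1) + c6*(x^3-x)) ^ 2) := by
          congr 2
          simp only [neg_sq]
          exact (swap_box (f := fun x y => fx x y ^ 2) (by exact (hfxc.pow 2).continuousOn)).symm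
      _ ≤ gradL2R φ (-1) 1 (-1) 1 * semiH2R w (-1) 1 (-1) 1 :=
          mul_le_mul hgrx hsx (Real.sqrt_nonneg _) hgr0
  · -- pdy case
    rw [one_mul]
    calc |∫ x in (-1:ℝ)..1, ∫ y in (-1:ℝ)..1,
          φ x y * pdy (fun a b => w a b - Ihat w a b) x y|
        = |∫ x in (-1:ℝ)..1, ∫ y in (-1:ℝ)..1, φ x y * (2*c5*y + c7*(3*y^2-1))| := by
          simp only [hpdye]
      _ = |∫ x in (-1:ℝ)..1, ∫ y in (-1:ℝ)..1, (-fy x y) * (c5*(y^2-1) + c7*(y^3-y))| := by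
          congr 1
          apply intervalIntegral.integral_congr
          intro x hx
          have hx' : x ∈ Set.Icc (-1:ℝ) 1 := hIcc ▸ hx
          have hneg : (∫ y in (-1:ℝ)..1, (-fy x y) * (c5*(y^2-1) + c7*(y^3-y)))
              = -∫ y in (-1:ℝ)..1, fy x y * (c5*(y^2-1) + c7*(y^3-y)) := by
            rw [← intervalIntegral.integral_neg]
            exact intervalIntegral.integral_congr (fun y _ => by ring)
          show (∫ y in (-1:ℝ)..1, φ x y * (2*c5*y + c7*(3*y^2-1)))
              = (∫ y in (-1:ℝ)..1, (-fy x y) * (c5*(y^2-1) + c7*(y^3-y)))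
          rw [hneg, intervalIntegral.integral_mul_deriv_eq_deriv_mul (a := (-1:ℝ)) (b := (1:ℝ))
            (u := fun y => φ x y) (v := fun y => c5*(y^2-1) + c7*(y^3-y))
            (u' := fun y => fy x y) (v' := fun y => 2*c5*y + c7*(3*y^2-1))
            (fun y hy => (hpack x hx' y (hIcc ▸ hy)).2.1) (fun y _ => hGyd y)
            ((by exact hfyc.comp (Continuous.prodMk_right x) :
              Continuous fun y => fy x y).intervalIntegrable _ _)
            ((by fun_prop :
              Continuous fun y : ℝ => 2*c5*y + c7*(3*y^2-1)).intervalIntegrable _ _)]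
          norm_num
      _ ≤ Real.sqrt (∫ x in (-1:ℝ)..1, ∫ y in (-1:ℝ)..1, (-fy x y) ^ 2) *
          Real.sqrt (2 * ∫ y in (-1:ℝ)..1, (c5*(y^2-1) + c7*(y^3-y)) ^ 2) :=
          core (f := fun t s => -fy t s) (by exact hfyc.neg) (by fun_prop)
      _ = Real.sqrt (∫ x in (-1:ℝ)..1, ∫ y in (-1:ℝ)..1, fy x y ^ 2) *
          Real.sqrt (2 * ∫ y in (-1:ℝ)..1, (c5*(y^2-1) + c7*(y^3-y)) ^ 2) := by
          simp only [neg_sq]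
      _ ≤ gradL2R φ (-1) 1 (-1) 1 * semiH2R w (-1) 1 (-1) 1 :=
          mul_le_mul hgry hsy (Real.sqrt_nonneg _) hgr0
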